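/- For all u, v ∈ D_w(A₁) one has ⟨A₁u, v⟩_{X_μ} = ∫₀¹ a u'' v'' dx − (γ₀/β₀) a(0) u(0) v(0) − (γ₁/β₁) a(1) u(1) v(1) = ⟨u, A₁v⟩_{X_μ}; in particular the operator A₁ : D_w(A₁) → X_μ is symmetric. -/

import Mathlib

open MeasureTheory Set Filter

/-- `f` is absolutely continuous on `[c,d]` with (a.e.) derivative `g`,
expressed via the fundamental theorem of calculus. -/
def ACOn (c d : ℝ) (f g : ℝ → ℝ) : Prop :=
  MeasureTheory.IntegrableOn g (Set.Icc c d) ∧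
    ∀ x ∈ Set.Icc c d, f x = f c + ∫ t in c..x, g t

/-- `f` is locally absolutely continuous on `[0,1] \ {x₀}` with derivative `g`. -/
def LocACOn (x₀ : ℝ) (f g : ℝ → ℝ) : Prop :=
  ∀ c d : ℝ, 0 ≤ c → d ≤ 1 → c ≤ d → x₀ ∉ Set.Icc c d → ACOn c d f g

/-- `a` is weakly degenerate with degeneracy point `x₀`. -/
def WeaklyDeg (a : ℝ → ℝ) (x₀ : ℝ) : Prop :=
  ContinuousOn a (Set.Icc 0 1) ∧ x₀ ∈ Set.Icc (0:ℝ) 1 ∧ a x₀ = 0 ∧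
    (∀ x ∈ Set.Icc (0:ℝ) 1, x ≠ x₀ → 0 < a x) ∧
    MeasureTheory.IntegrableOn (fun x => 1 / a x) (Set.Ioo 0 1)

/-- `a` is strongly degenerate with degeneracy point `x₀`. -/
def StronglyDeg (a : ℝ → ℝ) (x₀ : ℝ) : Prop :=
  ContinuousOn a (Set.Icc 0 1) ∧ x₀ ∈ Set.Icc (0:ℝ) 1 ∧ a x₀ = 0 ∧
    (∀ x ∈ Set.Icc (0:ℝ) 1, x ≠ x₀ → 0 < a x) ∧
    ¬ MeasureTheory.IntegrableOn (fun x => 1 / a x) (Set.Ioo 0 1)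

/-- Hypothesis (H): there is `K ∈ [1,2)` such that `x ↦ |x-x₀|^K / a x` is
non-increasing on `[0,x₀)` and non-decreasing on `(x₀,1]`. -/
def HypH (a : ℝ → ℝ) (x₀ : ℝ) : Prop :=
  ∃ K : ℝ, 1 ≤ K ∧ K < 2 ∧
    AntitoneOn (fun x => |x - x₀| ^ K / a x) (Set.Ico 0 x₀) ∧
    MonotoneOn (fun x => |x - x₀| ^ K / a x) (Set.Ioc x₀ 1)

/-- The squared `L²(0,1)` norm. -/
noncomputable def sqL2 (f : ℝ → ℝ) : ℝ := ∫ x in Set.Ioo (0:ℝ) 1, (f x) ^ 2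

/-- Membership of `u` (with derivative data `u', u''` and `w₁ = (a u'')'`,
`w₂ = (a u'')''`) in the domain `D_w(A₁)` (weakly degenerate case): `u ∈ H¹(0,1)`,
`u'` absolutely continuous on `[0,1]`, `√a u'' ∈ L²(0,1)`, `a u'' ∈ H²(0,1)` and
`u''(0) = u''(1) = 0`. -/
def MemD1w (a : ℝ → ℝ) (u u' u'' w₁ w₂ : ℝ → ℝ) : Prop :=
  ACOn 0 1 u u' ∧
  MeasureTheory.IntegrableOn (fun x => (u' x) ^ 2) (Set.Ioo 0 1) ∧
  ACOn 0 1 u' u'' ∧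
  MeasureTheory.IntegrableOn (fun x => a x * (u'' x) ^ 2) (Set.Ioo 0 1) ∧
  ACOn 0 1 (fun x => a x * u'' x) w₁ ∧ ACOn 0 1 w₁ w₂ ∧
  MeasureTheory.IntegrableOn (fun x => (w₂ x) ^ 2) (Set.Ioo 0 1) ∧
  u'' 0 = 0 ∧ u'' 1 = 0

/-- Membership in the domain `D_s(A₁)` (strongly degenerate case): as `MemD1w` but `u'`
is only locally absolutely continuous on `[0,1] \ {x₀}`. -/
def MemD1s (a : ℝ → ℝ) (x₀ : ℝ) (u u' u'' w₁ w₂ : ℝ → ℝ) : Prop :=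
  ACOn 0 1 u u' ∧
  MeasureTheory.IntegrableOn (fun x => (u' x) ^ 2) (Set.Ioo 0 1) ∧
  LocACOn x₀ u' u'' ∧
  MeasureTheory.IntegrableOn (fun x => a x * (u'' x) ^ 2) (Set.Ioo 0 1) ∧
  ACOn 0 1 (fun x => a x * u'' x) w₁ ∧ ACOn 0 1 w₁ w₂ ∧
  MeasureTheory.IntegrableOn (fun x => (w₂ x) ^ 2) (Set.Ioo 0 1) ∧
  u'' 0 = 0 ∧ u'' 1 = 0

/-- The inner product of `X_μ = L²((0,1), dx) ⊕ ℝ_{a(0)/β₀} ⊕ ℝ_{a(1)/β₁}`. -/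
noncomputable def innerX (a : ℝ → ℝ) (β₀ β₁ : ℝ) (f g : ℝ → ℝ) : ℝ :=
  (∫ x in Set.Ioo (0:ℝ) 1, f x * g x) + (a 0 / β₀) * (f 0 * g 0) + (a 1 / β₁) * (f 1 * g 1)

/-- The element `A₁u` of `X_μ`: it equals `(a u'')'' = w₂` on `(0,1)` and its boundary
values are dictated by the generalized Wentzell boundary conditions:
`(A₁u)(j) = (-1)^j (β_j / a(j)) (a u'')'(j) - γ_j u(j)`. -/
noncomputable def A1fun (a : ℝ → ℝ) (β₀ β₁ γ₀ γ₁ : ℝ) (u w₁ w₂ : ℝ → ℝ) : ℝ → ℝ :=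
  fun x =>
    if x = 0 then (β₀ / a 0) * w₁ 0 - γ₀ * u 0
    else if x = 1 then -(β₁ / a 1) * w₁ 1 - γ₁ * u 1
    else w₂ x

lemma integrableOn_mul_cont {φ G : ℝ → ℝ}
    (hφ : MeasureTheory.IntegrableOn φ (Set.Ioc 0 1))
    (hG : ContinuousOn G (Set.Icc 0 1)) :
    MeasureTheory.IntegrableOn (fun x => φ x * G x) (Set.Ioc (0:ℝ) 1) := by
  obtain ⟨M, hM⟩ := isCompact_Icc.exists_bound_of_continuousOn hG
  refine Integrable.mono' (hφ.norm.const_mul M) ?_ ?_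
  · exact hφ.aestronglyMeasurable.mul
      ((hG.mono Ioc_subset_Icc_self).aestronglyMeasurable measurableSet_Ioc)
  · filter_upwards [ae_restrict_mem measurableSet_Ioc] with x hx
    have h1 := hM x (Ioc_subset_Icc_self hx)
    have h2 : ‖φ x * G x‖ = ‖φ x‖ * ‖G x‖ := norm_mul _ _
    nlinarith [norm_nonneg (φ x), norm_nonneg (G x)]

lemma fubini_core {φ ψ : ℝ → ℝ}
    (hφ : MeasureTheory.IntegrableOn φ (Set.Icc 0 1))
    (hψ : MeasureTheory.IntegrableOn ψ (Set.Icc 0 1)) :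
    (∫ x in Set.Ioc (0:ℝ) 1, φ x * ∫ t in Set.Ioc (0:ℝ) x, ψ t)
      + (∫ t in Set.Ioc (0:ℝ) 1, ψ t * ∫ x in Set.Ioc (0:ℝ) t, φ x)
    = (∫ x in Set.Ioc (0:ℝ) 1, φ x) * (∫ t in Set.Ioc (0:ℝ) 1, ψ t) := by
  set μ : Measure ℝ := volume.restrict (Set.Ioc 0 1) with hμ
  have hφ' : Integrable φ μ := hφ.mono_set Ioc_subset_Icc_self
  have hψ' : Integrable ψ μ := hψ.mono_set Ioc_subset_Icc_self
  set G : ℝ → ℝ := fun x => ∫ t in Set.Ioc (0:ℝ) x, ψ t with hG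
  set F : ℝ → ℝ := fun x => ∫ t in Set.Ioc (0:ℝ) x, φ t with hF
  have hGc : ContinuousOn G (Set.Icc 0 1) := intervalIntegral.continuousOn_primitive hψ
  have hFc : ContinuousOn F (Set.Icc 0 1) := intervalIntegral.continuousOn_primitive hφ
  set C : ℝ := ∫ t in Set.Ioc (0:ℝ) 1, ψ t with hC
  -- split identity
  have hsplit : ∀ x ∈ Set.Ioc (0:ℝ) 1, (∫ t in Set.Ioc x 1, ψ t) = C - G x := by
    intro x hx
    have hu : Set.Ioc (0:ℝ) x ∪ Set.Ioc x 1 = Set.Ioc (0:ℝ) 1 :=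
      Set.Ioc_union_Ioc_eq_Ioc hx.1.le hx.2
    have h1 : IntegrableOn ψ (Set.Ioc 0 x) :=
      hψ.mono_set (fun t ht => ⟨ht.1.le, ht.2.trans hx.2⟩)
    have h2 : IntegrableOn ψ (Set.Ioc x 1) :=
      hψ.mono_set (fun t ht => ⟨(hx.1.trans ht.1).le, ht.2⟩)
    have := MeasureTheory.setIntegral_union (Set.Ioc_disjoint_Ioc_of_le le_rfl)
      measurableSet_Ioc h1 h2 (f := ψ) (μ := volume)
    rw [hu] at this
    simp only [hC, hG, this]; ring
  -- the indicator function
  set h : ℝ → ℝ → ℝ := fun x t => if x < t then φ x * ψ t else 0 with hh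
  have hhint : Integrable (Function.uncurry h) (μ.prod μ) := by
    have hs : MeasurableSet {p : ℝ × ℝ | p.1 < p.2} :=
      measurableSet_lt measurable_fst measurable_snd
    have hprod : Integrable (fun p : ℝ × ℝ => φ p.1 * ψ p.2) (μ.prod μ) :=
      hφ'.mul_prod hψ'
    have : Function.uncurry h =
        Set.indicator {p : ℝ × ℝ | p.1 < p.2} (fun p => φ p.1 * ψ p.2) := by
      funext p
      simp [hh, Function.uncurry, Set.indicator_apply]
    rw [this]
    exact hprod.indicator hs
  have hswap := MeasureTheory.integral_integral_swap hhint
  -- LHS of swap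
  have hL : (∫ x, ∫ t, h x t ∂μ ∂μ) = ∫ x in Set.Ioc (0:ℝ) 1, φ x * (C - G x) := by
    rw [hμ]
    refine MeasureTheory.setIntegral_congr_fun measurableSet_Ioc (fun x hx => ?_)
    have e1 : (fun t => h x t) = Set.indicator (Set.Ioi x) (fun t => φ x * ψ t) := by
      funext t; simp [hh, Set.indicator_apply, Set.mem_Ioi]
    rw [e1, MeasureTheory.integral_indicator measurableSet_Ioi,
      MeasureTheory.Measure.restrict_restrict measurableSet_Ioi]
    have e2 : Set.Ioi x ∩ Set.Ioc 0 1 = Set.Ioc x 1 := by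
      ext t
      simp only [Set.mem_inter_iff, Set.mem_Ioi, Set.mem_Ioc]
      constructor
      · rintro ⟨h1, _, h3⟩; exact ⟨h1, h3⟩
      · rintro ⟨h1, h2⟩; exact ⟨h1, hx.1.trans h1, h2⟩
    rw [e2, MeasureTheory.integral_const_mul, hsplit x hx]
  -- RHS of swap
  have hR : (∫ t, ∫ x, h x t ∂μ ∂μ) = ∫ t in Set.Ioc (0:ℝ) 1, ψ t * F t := by
    rw [hμ]
    refine MeasureTheory.setIntegral_congr_fun measurableSet_Ioc (fun t ht => ?_)
    have e1 : (fun x => h x t) = Set.indicator (Set.Iio t) (fun x => φ x * ψ t) := by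
      funext x; simp [hh, Set.indicator_apply, Set.mem_Iio]
    rw [e1, MeasureTheory.integral_indicator measurableSet_Iio,
      MeasureTheory.Measure.restrict_restrict measurableSet_Iio]
    have e2 : Set.Iio t ∩ Set.Ioc 0 1 = Set.Ioo 0 t := by
      ext x
      simp only [Set.mem_inter_iff, Set.mem_Iio, Set.mem_Ioc, Set.mem_Ioo]
      constructor
      · rintro ⟨h1, h2, _⟩; exact ⟨h2, h1⟩
      · rintro ⟨h1, h2⟩; exact ⟨h2, h1, (h2.trans_le ht.2).le⟩
    rw [e2, MeasureTheory.integral_mul_const,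
      show (∫ a in Set.Ioo (0:ℝ) t, φ a) = ∫ a in Set.Ioc (0:ℝ) t, φ a from
        (MeasureTheory.integral_Ioc_eq_integral_Ioo).symm]
    simp only [hF]
    ring
  -- combine
  have hmulG : IntegrableOn (fun x => φ x * G x) (Set.Ioc (0:ℝ) 1) :=
    integrableOn_mul_cont (hφ.mono_set Ioc_subset_Icc_self) hGc
  have hmulCG : IntegrableOn (fun x => φ x * (C - G x)) (Set.Ioc (0:ℝ) 1) :=
    integrableOn_mul_cont (hφ.mono_set Ioc_subset_Icc_self)
      (continuousOn_const.sub hGc)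
  have key : (∫ x in Set.Ioc (0:ℝ) 1, φ x * G x)
      + (∫ x in Set.Ioc (0:ℝ) 1, φ x * (C - G x))
      = (∫ x in Set.Ioc (0:ℝ) 1, φ x) * C := by
    rw [← MeasureTheory.integral_add hmulG hmulCG]
    have : ∀ x, φ x * G x + φ x * (C - G x) = φ x * C := fun x => by ring
    simp_rw [this]
    rw [MeasureTheory.integral_mul_const]
  have hswap' : (∫ x in Set.Ioc (0:ℝ) 1, φ x * (C - G x))
      = ∫ t in Set.Ioc (0:ℝ) 1, ψ t * F t := by
    rw [← hL, ← hR]; exact hswap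
  calc (∫ x in Set.Ioc (0:ℝ) 1, φ x * G x) + (∫ t in Set.Ioc (0:ℝ) 1, ψ t * F t)
      = (∫ x in Set.Ioc (0:ℝ) 1, φ x * G x)
        + (∫ x in Set.Ioc (0:ℝ) 1, φ x * (C - G x)) := by rw [hswap']
    _ = (∫ x in Set.Ioc (0:ℝ) 1, φ x) * C := key

lemma ibp {f f' g g' : ℝ → ℝ} (hf : ACOn 0 1 f f') (hg : ACOn 0 1 g g') :
    MeasureTheory.IntegrableOn (fun x => f' x * g x) (Set.Ioo 0 1) ∧
    MeasureTheory.IntegrableOn (fun x => f x * g' x) (Set.Ioo 0 1) ∧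
    (∫ x in Set.Ioo (0:ℝ) 1, f' x * g x) + ∫ x in Set.Ioo (0:ℝ) 1, f x * g' x
      = f 1 * g 1 - f 0 * g 0 := by
  obtain ⟨hφ, hfeq⟩ := hf
  obtain ⟨hψ, hgeq⟩ := hg
  set F : ℝ → ℝ := fun x => ∫ t in Set.Ioc (0:ℝ) x, f' t with hF
  set G : ℝ → ℝ := fun x => ∫ t in Set.Ioc (0:ℝ) x, g' t with hG
  have hFc : ContinuousOn F (Set.Icc 0 1) := intervalIntegral.continuousOn_primitive hφ
  have hGc : ContinuousOn G (Set.Icc 0 1) := intervalIntegral.continuousOn_primitive hψ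
  have hfx : ∀ x ∈ Set.Icc (0:ℝ) 1, f x = f 0 + F x := by
    intro x hx
    rw [hfeq x hx, intervalIntegral.integral_of_le hx.1]
  have hgx : ∀ x ∈ Set.Icc (0:ℝ) 1, g x = g 0 + G x := by
    intro x hx
    rw [hgeq x hx, intervalIntegral.integral_of_le hx.1]
  have hφIoc : MeasureTheory.IntegrableOn f' (Set.Ioc (0:ℝ) 1) :=
    hφ.mono_set Set.Ioc_subset_Icc_self
  have hψIoc : MeasureTheory.IntegrableOn g' (Set.Ioc (0:ℝ) 1) :=
    hψ.mono_set Set.Ioc_subset_Icc_self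
  -- integrabilities
  have hint1' : MeasureTheory.IntegrableOn (fun x => f' x * (g 0 + G x)) (Set.Ioc (0:ℝ) 1) :=
    integrableOn_mul_cont hφIoc (continuousOn_const.add hGc)
  have hint2' : MeasureTheory.IntegrableOn (fun x => g' x * (f 0 + F x)) (Set.Ioc (0:ℝ) 1) :=
    integrableOn_mul_cont hψIoc (continuousOn_const.add hFc)
  have hint1 : MeasureTheory.IntegrableOn (fun x => f' x * g x) (Set.Ioc (0:ℝ) 1) := by
    refine hint1'.congr_fun (fun x hx => ?_) measurableSet_Ioc
    rw [hgx x (Set.Ioc_subset_Icc_self hx)]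
  have hint2 : MeasureTheory.IntegrableOn (fun x => f x * g' x) (Set.Ioc (0:ℝ) 1) := by
    refine (hint2'.congr_fun (fun x hx => ?_) measurableSet_Ioc)
    rw [hfx x (Set.Ioc_subset_Icc_self hx)]; ring
  refine ⟨hint1.mono_set Set.Ioo_subset_Ioc_self, hint2.mono_set Set.Ioo_subset_Ioc_self, ?_⟩
  -- main equality
  have fub := fubini_core hφ hψ
  have e1 : (∫ x in Set.Ioo (0:ℝ) 1, f' x * g x)
      = (∫ x in Set.Ioc (0:ℝ) 1, f' x * g 0) + ∫ x in Set.Ioc (0:ℝ) 1, f' x * G x := by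
    rw [← MeasureTheory.integral_Ioc_eq_integral_Ioo,
      ← MeasureTheory.integral_add (hφIoc.mul_const _)
        (integrableOn_mul_cont hφIoc hGc)]
    refine MeasureTheory.setIntegral_congr_fun measurableSet_Ioc (fun x hx => ?_)
    rw [hgx x (Set.Ioc_subset_Icc_self hx)]; ring
  have e2 : (∫ x in Set.Ioo (0:ℝ) 1, f x * g' x)
      = (∫ x in Set.Ioc (0:ℝ) 1, g' x * f 0) + ∫ x in Set.Ioc (0:ℝ) 1, g' x * F x := by
    rw [← MeasureTheory.integral_Ioc_eq_integral_Ioo,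
      ← MeasureTheory.integral_add (hψIoc.mul_const _)
        (integrableOn_mul_cont hψIoc hFc)]
    refine MeasureTheory.setIntegral_congr_fun measurableSet_Ioc (fun x hx => ?_)
    rw [hfx x (Set.Ioc_subset_Icc_self hx)]; ring
  have hf1 : f 1 = f 0 + F 1 := hfx 1 (by constructor <;> norm_num)
  have hg1 : g 1 = g 0 + G 1 := hgx 1 (by constructor <;> norm_num)
  have hP : (∫ x in Set.Ioc (0:ℝ) 1, f' x * g 0)
      = (F 1) * g 0 := by
    rw [MeasureTheory.integral_mul_const]
  have hQ : (∫ x in Set.Ioc (0:ℝ) 1, g' x * f 0)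
      = (G 1) * f 0 := by
    rw [MeasureTheory.integral_mul_const]
  have hFG : F 1 = ∫ x in Set.Ioc (0:ℝ) 1, f' x := rfl
  have hGG : G 1 = ∫ t in Set.Ioc (0:ℝ) 1, g' t := rfl
  rw [e1, e2, hP, hQ, hf1, hg1]
  have := fub
  rw [← hFG, ← hGG] at this
  linear_combination this

lemma keylem (β₀ β₁ γ₀ γ₁ : ℝ) (hβ₀ : β₀ ≠ 0) (hβ₁ : β₁ ≠ 0)
    (a : ℝ → ℝ) (ha0 : a 0 ≠ 0) (ha1 : a 1 ≠ 0)
    (u u' u'' w₁ w₂ v v' v'' : ℝ → ℝ)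
    (hu : MemD1w a u u' u'' w₁ w₂)
    (hvac : ACOn 0 1 v v') (hv'ac : ACOn 0 1 v' v'') :
    innerX a β₀ β₁ (A1fun a β₀ β₁ γ₀ γ₁ u w₁ w₂) v =
      (∫ x in Set.Ioo (0:ℝ) 1, a x * u'' x * v'' x)
        - (γ₀ / β₀) * (a 0 * (u 0 * v 0)) - (γ₁ / β₁) * (a 1 * (u 1 * v 1)) := by
  obtain ⟨-, -, -, -, hau''ac, hw₁ac, -, hu''0, hu''1⟩ := hu
  have ibp1 := (ibp hw₁ac hvac).2.2
  have ibp2 := (ibp hau''ac hv'ac).2.2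
  simp only [hu''0, hu''1, mul_zero, zero_mul, sub_zero, zero_sub] at ibp2
  have hA0 : A1fun a β₀ β₁ γ₀ γ₁ u w₁ w₂ 0 = (β₀ / a 0) * w₁ 0 - γ₀ * u 0 := by
    simp [A1fun]
  have hA1 : A1fun a β₀ β₁ γ₀ γ₁ u w₁ w₂ 1 = -(β₁ / a 1) * w₁ 1 - γ₁ * u 1 := by
    norm_num [A1fun]
  have hint : (∫ x in Set.Ioo (0:ℝ) 1, A1fun a β₀ β₁ γ₀ γ₁ u w₁ w₂ x * v x)
      = ∫ x in Set.Ioo (0:ℝ) 1, w₂ x * v x := by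
    refine MeasureTheory.setIntegral_congr_fun measurableSet_Ioo (fun x hx => ?_)
    simp [A1fun, hx.1.ne', hx.2.ne]
  have e : (∫ x in Set.Ioo (0:ℝ) 1, w₂ x * v x)
      = w₁ 1 * v 1 - w₁ 0 * v 0 + ∫ x in Set.Ioo (0:ℝ) 1, a x * u'' x * v'' x := by
    linarith [ibp1, ibp2]
  unfold innerX
  rw [hint, hA0, hA1, e]
  field_simp
  ring

lemma innerX_comm (a : ℝ → ℝ) (β₀ β₁ : ℝ) (p q : ℝ → ℝ) :
    innerX a β₀ β₁ p q = innerX a β₀ β₁ q p := by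
  unfold innerX
  rw [show (∫ x in Set.Ioo (0:ℝ) 1, p x * q x) = ∫ x in Set.Ioo (0:ℝ) 1, q x * p x from by
    simp_rw [mul_comm]]
  ring

/-- the operator `A₁` with generalized Wentzell boundary conditions is
symmetric on `X_μ`:
`⟨A₁u, v⟩ = ∫ a u'' v'' - (γ₀/β₀) a(0) u(0) v(0) - (γ₁/β₁) a(1) u(1) v(1) = ⟨u, A₁v⟩`. -/
theorem statement11 (β₀ β₁ γ₀ γ₁ : ℝ) (hβ₀ : 0 < β₀) (hβ₁ : 0 < β₁)
    (hγ₀ : γ₀ ≤ 0) (hγ₁ : γ₁ ≤ 0)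
    (a : ℝ → ℝ) (x₀ : ℝ) (hx₀ : x₀ ∈ Set.Ioo (0:ℝ) 1) (ha : WeaklyDeg a x₀)
    (u u' u'' w₁ w₂ v v' v'' z₁ z₂ : ℝ → ℝ)
    (hu : MemD1w a u u' u'' w₁ w₂) (hv : MemD1w a v v' v'' z₁ z₂) :
    innerX a β₀ β₁ (A1fun a β₀ β₁ γ₀ γ₁ u w₁ w₂) v =
      (∫ x in Set.Ioo (0:ℝ) 1, a x * u'' x * v'' x)
        - (γ₀ / β₀) * (a 0 * (u 0 * v 0)) - (γ₁ / β₁) * (a 1 * (u 1 * v 1)) ∧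
    innerX a β₀ β₁ (A1fun a β₀ β₁ γ₀ γ₁ u w₁ w₂) v =
      innerX a β₀ β₁ u (A1fun a β₀ β₁ γ₀ γ₁ v z₁ z₂) := by
  have ha0 : a 0 ≠ 0 :=
    (ha.2.2.2.1 0 ⟨le_rfl, zero_le_one⟩ hx₀.1.ne).ne'
  have ha1 : a 1 ≠ 0 :=
    (ha.2.2.2.1 1 ⟨zero_le_one, le_rfl⟩ hx₀.2.ne').ne'
  have part1 := keylem β₀ β₁ γ₀ γ₁ hβ₀.ne' hβ₁.ne' a ha0 ha1 u u' u'' w₁ w₂ v v' v''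
    hu hv.1 hv.2.2.1
  have part2 := keylem β₀ β₁ γ₀ γ₁ hβ₀.ne' hβ₁.ne' a ha0 ha1 v v' v'' z₁ z₂ u u' u''
    hv hu.1 hu.2.2.1
  refine ⟨part1, ?_⟩
  rw [part1, innerX_comm, part2]
  have : (∫ x in Set.Ioo (0:ℝ) 1, a x * v'' x * u'' x)
      = ∫ x in Set.Ioo (0:ℝ) 1, a x * u'' x * v'' x := by
    congr 1
    funext x
    ring
  rw [this]
  ring
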